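/- Let θ be a nonempty rim with θ̂ ≠ ∅ whose north-east arm is not connected to θ̂, and set a = |θ| - |θ̂|. Then for every integer p ≥ 1: if a = 1 then C(θ,p) = 2·C(θ̂,p-1) - 2·C(θ̂,p), and if a > 1 then C(θ,p) = 2·C(θ̂,p-a) - 3·C(θ̂,p-a+1) + C(θ̂,p-a+2). -/

import Mathlib

/-- `hcoef a b = Σ_{j=0}^{min(a,b)} (-1)^j 2^{a-j} binom(a,j)`; it is `0` when `b < 0`. -/
def hcoef (a : ℕ) (b : ℤ) : ℤ :=
  ∑ j ∈ Finset.range (a + 1),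
    if (j : ℤ) ≤ b then (-1) ^ j * 2 ^ (a - j) * (a.choose j) else 0

attribute [local instance] Classical.propDecidable

/-- The south-east corners of a finite set of boxes: boxes `(i,j)` such that
neither `(i+1,j)` nor `(i,j+1)` belongs to the set. -/
def seCorners (θ : Finset (ℤ × ℤ)) : Finset (ℤ × ℤ) :=
  θ.filter fun b => (b.1 + 1, b.2) ∉ θ ∧ (b.1, b.2 + 1) ∉ θ

/-- The south-east rim of `θ`: boxes `(i,j) ∈ θ` such that no box `(i',j') ∈ θ`
has `i' > i` and `j' > j`. -/
def seRim (θ : Finset (ℤ × ℤ)) : Finset (ℤ × ℤ) :=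
  θ.filter fun b => ∀ b' ∈ θ, ¬ (b.1 < b'.1 ∧ b.2 < b'.2)

/-- `d(θ)`: the number of boxes in the south-east rim of `θ`. -/
def dRim (θ : Finset (ℤ × ℤ)) : ℕ := (seRim θ).card

/-- `θ` is a rim if it equals its own south-east rim. -/
def IsRim (θ : Finset (ℤ × ℤ)) : Prop := θ = seRim θ

/-- Two boxes are adjacent (connected) if they share a side. -/
def Adjacent (b b' : ℤ × ℤ) : Prop := |b.1 - b'.1| + |b.2 - b'.2| = 1

/-- `b'` can be reached from `b` by a chain of adjacent boxes of `θ`. -/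
def Reach (θ : Finset (ℤ × ℤ)) (b b' : ℤ × ℤ) : Prop :=
  Relation.ReflTransGen (fun x y => y ∈ θ ∧ Adjacent x y) b b'

/-- The connected components of `θ`. -/
noncomputable def comps (θ : Finset (ℤ × ℤ)) : Finset (Finset (ℤ × ℤ)) :=
  θ.image fun b => θ.filter fun b' => Reach θ b b'

/-- `N(θ)`: the number of connected components of `θ`. -/
noncomputable def Ncomp (θ : Finset (ℤ × ℤ)) : ℕ := (comps θ).card

/-- `N⁻(θ) = max(N(θ) - 1, 0)`. -/
noncomputable def Nminus (θ : Finset (ℤ × ℤ)) : ℕ := Ncomp θ - 1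

/-- `N'(θ)`: the number of connected components of `θ` containing no diagonal box. -/
noncomputable def Nprime (θ : Finset (ℤ × ℤ)) : ℕ :=
  ((comps θ).filter fun c => ∀ b ∈ c, b.1 ≠ b.2).card

/-- `B(θ,p) = Σ_S (-1)^{|S|} h(N⁻(θ∖S), d(θ∖S) - p)`, the sum over subsets `S`
of the set of south-east corners of `θ`. -/
noncomputable def Bcoef (θ : Finset (ℤ × ℤ)) (p : ℤ) : ℤ :=
  ∑ S ∈ (seCorners θ).powerset,
    (-1) ^ S.card * hcoef (Nminus (θ \ S)) ((dRim (θ \ S) : ℤ) - p)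

/-- `C(θ,p) = Σ_S (-1)^{|S|} h(N'(θ∖S), d(θ∖S) - p)`, the sum over subsets `S`
of the set of south-east corners of `θ`. -/
noncomputable def Ccoef (θ : Finset (ℤ × ℤ)) (p : ℤ) : ℤ :=
  ∑ S ∈ (seCorners θ).powerset,
    (-1) ^ S.card * hcoef (Nprime (θ \ S)) ((dRim (θ \ S) : ℤ) - p)

/-- A strict partition with largest part at most `n`, encoded as a function
with `lam i = 0` for `i` beyond the length. -/
def IsStrictPartition (n : ℕ) (lam : ℤ → ℤ) : Prop :=
  lam 1 ≤ (n : ℤ) ∧ (∀ i : ℤ, 1 ≤ i → 0 ≤ lam i) ∧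
  (∀ i : ℤ, 1 ≤ i → lam (i + 1) = 0 ∨ lam (i + 1) < lam i)

/-- The shifted Young diagram `{(i,j) : 1 ≤ i ≤ ℓ, i ≤ j ≤ λ_i + i - 1}` of a
strict partition. -/
noncomputable def shiftedD (n : ℕ) (lam : ℤ → ℤ) : Finset (ℤ × ℤ) :=
  (Finset.Icc (1 : ℤ) (n : ℤ) ×ˢ Finset.Icc (1 : ℤ) (2 * (n : ℤ))).filter
    fun b => b.1 ≤ b.2 ∧ b.2 ≤ lam b.1 + b.1 - 1

/-- `θ` is a shifted skew diagram: `θ = ν/λ` for strict partitions `λ ⊆ ν`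
with `ν_1 ≤ n`. -/
def IsShiftedSkewDiagram (n : ℕ) (θ : Finset (ℤ × ℤ)) : Prop :=
  ∃ lam nu : ℤ → ℤ, IsStrictPartition n lam ∧ IsStrictPartition n nu ∧
    (∀ i : ℤ, 1 ≤ i → lam i ≤ nu i) ∧ θ = shiftedD n nu \ shiftedD n lam

/-- All boxes of `φ` lie in a single row. -/
def IsRow (φ : Finset (ℤ × ℤ)) : Prop := ∃ i : ℤ, ∀ b ∈ φ, b.1 = i

/-- All boxes of `φ` lie in a single column. -/
def IsCol (φ : Finset (ℤ × ℤ)) : Prop := ∃ j : ℤ, ∀ b ∈ φ, b.2 = j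

/-- `φ` is a row or a column. -/
def IsRowOrCol (φ : Finset (ℤ × ℤ)) : Prop := IsRow φ ∨ IsCol φ

/-- The intersection of `θ` with the `s × s` square whose upper-right box
is `(i0, j0)`. -/
def armAt (θ : Finset (ℤ × ℤ)) (i0 j0 : ℤ) (s : ℕ) : Finset (ℤ × ℤ) :=
  θ.filter fun b =>
    i0 ≤ b.1 ∧ b.1 ≤ i0 + (s : ℤ) - 1 ∧ j0 - (s : ℤ) + 1 ≤ b.2 ∧ b.2 ≤ j0

section Helpers

lemma adj_symm {b b' : ℤ × ℤ} (h : Adjacent b b') : Adjacent b' b := by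
  unfold Adjacent at *; rw [abs_sub_comm b'.1, abs_sub_comm b'.2]; exact h

lemma reach_mem {X : Finset (ℤ × ℤ)} {b b' : ℤ × ℤ} (hb : b ∈ X) (h : Reach X b b') :
    b' ∈ X := by
  induction h with
  | refl => exact hb
  | tail _ h2 _ => exact h2.1

lemma reach_mono {X Y : Finset (ℤ × ℤ)} {b b' : ℤ × ℤ} (hXY : X ⊆ Y) (h : Reach X b b') :
    Reach Y b b' := by
  induction h with
  | refl => exact Relation.ReflTransGen.refl
  | tail _ h2 ih => exact Relation.ReflTransGen.tail ih ⟨hXY h2.1, h2.2⟩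

lemma reach_symm {X : Finset (ℤ × ℤ)} {b b' : ℤ × ℤ} (hb : b ∈ X) (h : Reach X b b') :
    Reach X b' b := by
  induction h with
  | refl => exact Relation.ReflTransGen.refl
  | @tail m c h1 h2 ih =>
      exact Relation.ReflTransGen.trans
        (Relation.ReflTransGen.single ⟨reach_mem hb h1, adj_symm h2.2⟩) ih

lemma reach_stay {A X : Finset (ℤ × ℤ)} (hnadj : ∀ x ∈ A, ∀ y ∈ X, ¬ Adjacent x y)
    {b b' : ℤ × ℤ} (hb : b ∈ A) (h : Reach (A ∪ X) b b') : b' ∈ A ∧ Reach A b b' := by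
  induction h with
  | refl => exact ⟨hb, Relation.ReflTransGen.refl⟩
  | @tail m c h1 h2 ih =>
      rcases Finset.mem_union.1 h2.1 with hc | hc
      · exact ⟨hc, Relation.ReflTransGen.tail ih.2 ⟨hc, h2.2⟩⟩
      · exact absurd h2.2 (hnadj m ih.1 c hc)

lemma mem_comps_subset {X : Finset (ℤ × ℤ)} {c : Finset (ℤ × ℤ)} (h : c ∈ comps X) :
    c ⊆ X ∧ c.Nonempty := by
  rcases Finset.mem_image.1 h with ⟨b, hb, rfl⟩
  exact ⟨Finset.filter_subset _ _, ⟨b, Finset.mem_filter.2 ⟨hb, Relation.ReflTransGen.refl⟩⟩⟩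

lemma comps_union {A X : Finset (ℤ × ℤ)}
    (hnadj : ∀ x ∈ A, ∀ y ∈ X, ¬ Adjacent x y) :
    comps (A ∪ X) = comps A ∪ comps X := by
  have hnadj' : ∀ x ∈ X, ∀ y ∈ A, ¬ Adjacent x y := fun x hx y hy h =>
    hnadj y hy x hx (adj_symm h)
  have hL : ∀ b ∈ A, ((A ∪ X).filter fun b' => Reach (A ∪ X) b b')
      = A.filter fun b' => Reach A b b' := by
    intro b hb
    ext b'
    simp only [Finset.mem_filter]
    constructor
    · rintro ⟨h1, h2⟩
      exact ⟨(reach_stay hnadj hb h2).1, (reach_stay hnadj hb h2).2⟩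
    · rintro ⟨h1, h2⟩
      exact ⟨Finset.mem_union_left _ h1, reach_mono Finset.subset_union_left h2⟩
  have hR : ∀ b ∈ X, ((A ∪ X).filter fun b' => Reach (A ∪ X) b b')
      = X.filter fun b' => Reach X b b' := by
    intro b hb
    ext b'
    simp only [Finset.mem_filter]
    constructor
    · rintro ⟨h1, h2⟩
      rw [Finset.union_comm] at h2
      exact ⟨(reach_stay hnadj' hb h2).1, (reach_stay hnadj' hb h2).2⟩
    · rintro ⟨h1, h2⟩
      exact ⟨Finset.mem_union_right _ h1, reach_mono Finset.subset_union_right h2⟩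
  unfold comps
  rw [Finset.image_union]
  congr 1
  · exact Finset.image_congr (fun b hb => hL b hb)
  · exact Finset.image_congr (fun b hb => hR b hb)

lemma Nprime_union {A X : Finset (ℤ × ℤ)} (hdisj : Disjoint A X)
    (hnadj : ∀ x ∈ A, ∀ y ∈ X, ¬ Adjacent x y) :
    Nprime (A ∪ X) = Nprime A + Nprime X := by
  unfold Nprime
  rw [comps_union hnadj, Finset.filter_union]
  apply Finset.card_union_of_disjoint
  apply Finset.disjoint_left.2
  intro c hc hc'
  have h1 := mem_comps_subset (Finset.mem_filter.1 hc).1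
  have h2 := mem_comps_subset (Finset.mem_filter.1 hc').1
  rcases h1.2 with ⟨b, hb⟩
  exact (Finset.disjoint_left.1 hdisj (h1.1 hb) (h2.1 hb))

end Helpers
section Helpers2

lemma reach_row {X : Finset (ℤ × ℤ)} (i j : ℤ) :
    ∀ k : ℕ, (∀ j', j ≤ j' → j' ≤ j + k → (i, j') ∈ X) → Reach X (i, j) (i, j + k) := by
  intro k
  induction k with
  | zero => intro _; simp only [Nat.cast_zero, add_zero]; exact Relation.ReflTransGen.refl
  | succ m ih =>
      intro h
      have h1 : Reach X (i, j) (i, j + m) := ih (fun j' h1 h2 => h j' h1 (by push_cast; omega))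
      refine Relation.ReflTransGen.tail h1 ⟨?_, ?_⟩
      · have := h (j + ((m : ℤ) + 1)) (by omega) (by push_cast; omega)
        convert this using 2
        push_cast; ring
      · unfold Adjacent; simp

lemma reach_col {X : Finset (ℤ × ℤ)} (i j : ℤ) :
    ∀ k : ℕ, (∀ i', i ≤ i' → i' ≤ i + k → (i', j) ∈ X) → Reach X (i, j) (i + k, j) := by
  intro k
  induction k with
  | zero => intro _; simp only [Nat.cast_zero, add_zero]; exact Relation.ReflTransGen.refl
  | succ m ih =>
      intro h
      have h1 : Reach X (i, j) (i + m, j) := ih (fun i' h1 h2 => h i' h1 (by push_cast; omega))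
      refine Relation.ReflTransGen.tail h1 ⟨?_, ?_⟩
      · have := h (i + ((m : ℤ) + 1)) (by omega) (by push_cast; omega)
        convert this using 2
        push_cast; ring
      · unfold Adjacent; simp

lemma comps_of_conn {X : Finset (ℤ × ℤ)} (hne : X.Nonempty)
    (hconn : ∀ b ∈ X, ∀ b' ∈ X, Reach X b b') : comps X = {X} := by
  unfold comps
  have : ∀ b ∈ X, (X.filter fun b' => Reach X b b') = X := by
    intro b hb
    apply Finset.filter_true_of_mem
    intro b' hb'
    exact hconn b hb b' hb'
  rw [Finset.image_congr (fun b hb => this b hb)]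
  simpa using Finset.image_const hne X

lemma Nprime_eq_one {X : Finset (ℤ × ℤ)} (hne : X.Nonempty)
    (hconn : ∀ b ∈ X, ∀ b' ∈ X, Reach X b b') (hdiag : ∀ b ∈ X, b.1 ≠ b.2) :
    Nprime X = 1 := by
  unfold Nprime
  rw [comps_of_conn hne hconn]
  rw [Finset.filter_singleton, if_pos hdiag]
  simp

lemma Nprime_empty : Nprime (∅ : Finset (ℤ × ℤ)) = 0 := by
  unfold Nprime comps
  simp

end Helpers2
section Hrec

lemma hcoef_rec (m : ℕ) (b : ℤ) : hcoef (m + 1) b = 2 * hcoef m b - hcoef m (b - 1) := by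
  unfold hcoef
  have key : ∑ j ∈ Finset.range (m + 1 + 1),
      (if (j : ℤ) ≤ b then (-1) ^ j * 2 ^ (m + 1 - j) * ((m+1).choose j : ℤ) else 0)
      = (if (0 : ℤ) ≤ b then (2:ℤ) ^ (m + 1) else 0)
        + ∑ j ∈ Finset.range (m + 1),
            (if ((j : ℤ) + 1) ≤ b then (-1) ^ (j+1) * 2 ^ (m - j) * ((m.choose j : ℤ) + (m.choose (j+1) : ℤ)) else 0) := by
    rw [Finset.sum_range_succ' (fun j => if (j : ℤ) ≤ b then (-1) ^ j * 2 ^ (m + 1 - j) * ((m+1).choose j : ℤ) else 0) (m+1)]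
    rw [add_comm]
    congr 1
    · simp
    · apply Finset.sum_congr rfl
      intro j hj
      have hj' : j ≤ m := by simpa [Nat.lt_succ_iff] using Finset.mem_range.1 hj
      have h1 : (m + 1) - (j + 1) = m - j := by omega
      have h2 : ((m+1).choose (j+1) : ℤ) = (m.choose j : ℤ) + (m.choose (j+1) : ℤ) := by
        rw [Nat.choose_succ_succ]; push_cast; ring
      have h3 : ((j : ℤ) + 1) = ((j + 1 : ℕ) : ℤ) := by push_cast; ring
      rw [← h3, h1, h2]
  rw [key]
  -- split the j+1 sum into the C(m,j) part and the C(m,j+1) part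
  have split : ∑ j ∈ Finset.range (m + 1),
      (if ((j : ℤ) + 1) ≤ b then (-1) ^ (j+1) * 2 ^ (m - j) * ((m.choose j : ℤ) + (m.choose (j+1) : ℤ)) else 0)
      = (∑ j ∈ Finset.range (m + 1),
          (if ((j : ℤ) + 1) ≤ b then (-1) ^ (j+1) * 2 ^ (m - j) * (m.choose j : ℤ) else 0))
        + ∑ j ∈ Finset.range (m + 1),
          (if ((j : ℤ) + 1) ≤ b then (-1) ^ (j+1) * 2 ^ (m - j) * (m.choose (j+1) : ℤ) else 0) := by
    rw [← Finset.sum_add_distrib]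
    apply Finset.sum_congr rfl
    intro j hj
    split <;> ring
  rw [split]
  -- first part is -hcoef m (b-1)
  have part1 : ∑ j ∈ Finset.range (m + 1),
      (if ((j : ℤ) + 1) ≤ b then (-1) ^ (j+1) * 2 ^ (m - j) * (m.choose j : ℤ) else 0)
      = - ∑ j ∈ Finset.range (m + 1),
          (if (j : ℤ) ≤ b - 1 then (-1) ^ j * 2 ^ (m - j) * (m.choose j : ℤ) else 0) := by
    rw [← Finset.sum_neg_distrib]
    apply Finset.sum_congr rfl
    intro j hj
    by_cases hc : (j : ℤ) + 1 ≤ b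
    · rw [if_pos hc, if_pos (by omega : (j : ℤ) ≤ b - 1)]; ring
    · rw [if_neg hc, if_neg (by omega : ¬ (j : ℤ) ≤ b - 1)]; ring
  -- second part: shift index
  have part2 : ∑ j ∈ Finset.range (m + 1),
      (if ((j : ℤ) + 1) ≤ b then (-1) ^ (j+1) * 2 ^ (m - j) * (m.choose (j+1) : ℤ) else 0)
      = (∑ j ∈ Finset.range (m + 1), (if (j : ℤ) ≤ b then (-1) ^ j * 2 ^ (m + 1 - j) * (m.choose j : ℤ) else 0))
        - (if (0:ℤ) ≤ b then (2:ℤ)^(m+1) else 0) := by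
    rw [Finset.sum_range_succ' (fun j => if (j : ℤ) ≤ b then (-1) ^ j * 2 ^ (m + 1 - j) * (m.choose j : ℤ) else 0) m]
    have h0 : (if ((0:ℕ) : ℤ) ≤ b then ((-1):ℤ) ^ (0:ℕ) * 2 ^ (m + 1 - 0) * (m.choose 0 : ℤ) else 0)
        = (if (0:ℤ) ≤ b then (2:ℤ)^(m+1) else 0) := by
      by_cases hb : (0:ℤ) ≤ b
      · rw [if_pos (by exact_mod_cast hb), if_pos hb]; simp
      · rw [if_neg (by exact_mod_cast hb), if_neg hb]
    rw [h0, add_sub_cancel_right]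
    rw [Finset.sum_range_succ]
    have hlast : (if ((m:ℕ) : ℤ) + 1 ≤ b then ((-1):ℤ) ^ (m+1) * 2 ^ (m - m) * (m.choose (m+1) : ℤ) else 0) = 0 := by
      simp [Nat.choose_succ_self]
    rw [hlast, add_zero]
    apply Finset.sum_congr rfl
    intro j hj
    have hj' : j < m := Finset.mem_range.1 hj
    have h1 : (m + 1) - (j + 1) = m - j := by omega
    have h3 : ((j : ℤ) + 1) = ((j + 1 : ℕ) : ℤ) := by push_cast; ring
    rw [h3, h1]
  rw [part1, part2]
  -- remaining: relate ∑ 2^{m+1-j} to 2 * ∑ 2^{m-j}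
  have part3 : ∑ j ∈ Finset.range (m + 1),
      (if (j : ℤ) ≤ b then (-1) ^ j * 2 ^ (m + 1 - j) * (m.choose j : ℤ) else 0)
      = 2 * ∑ j ∈ Finset.range (m + 1),
          (if (j : ℤ) ≤ b then (-1) ^ j * 2 ^ (m - j) * (m.choose j : ℤ) else 0) := by
    rw [Finset.mul_sum]
    apply Finset.sum_congr rfl
    intro j hj
    have hj' : j ≤ m := by simpa [Nat.lt_succ_iff] using Finset.mem_range.1 hj
    have h1 : m + 1 - j = (m - j) + 1 := by omega
    rw [h1]
    split <;> ring
  rw [part3]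
  ring

end Hrec
section Skew

lemma mem_shiftedD {n : ℕ} {mu : ℤ → ℤ} {b : ℤ × ℤ} :
    b ∈ shiftedD n mu ↔ 1 ≤ b.1 ∧ b.1 ≤ (n:ℤ) ∧ 1 ≤ b.2 ∧ b.2 ≤ 2*(n:ℤ) ∧
      b.1 ≤ b.2 ∧ b.2 ≤ mu b.1 + b.1 - 1 := by
  unfold shiftedD
  simp only [Finset.mem_filter, Finset.mem_product, Finset.mem_Icc]
  tauto

lemma part_mono {n : ℕ} {mu : ℤ → ℤ} (h : IsStrictPartition n mu) :
    ∀ k : ℕ, ∀ i : ℤ, 1 ≤ i → 0 < mu (i + k) → mu (i + k) + k ≤ mu i := by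
  intro k
  induction k with
  | zero => intro i hi hpos; simp
  | succ m ih =>
      intro i hi hpos
      have h1 : mu (i + m + 1) = 0 ∨ mu (i + m + 1) < mu (i + m) := h.2.2 (i + m) (by omega)
      have h2 : mu (i + (m+1:ℕ)) = mu (i + m + 1) := by push_cast; ring_nf
      rw [h2] at hpos ⊢
      rcases h1 with h1 | h1
      · omega
      · have hpos' : 0 < mu (i + m) := by omega
        have := ih i hi hpos'
        push_cast
        omega

lemma skew_le {n : ℕ} {θ : Finset (ℤ × ℤ)} (hθ : IsShiftedSkewDiagram n θ) :
    ∀ b ∈ θ, 1 ≤ b.1 ∧ b.1 ≤ b.2 := by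
  obtain ⟨lam, nu, _, _, _, rfl⟩ := hθ
  intro b hb
  have := (mem_shiftedD.1 (Finset.mem_sdiff.1 hb).1)
  exact ⟨this.1, this.2.2.2.2.1⟩

lemma row_cont {n : ℕ} {θ : Finset (ℤ × ℤ)} (hθ : IsShiftedSkewDiagram n θ)
    {i j j' j'' : ℤ} (h1 : (i, j) ∈ θ) (h2 : (i, j'') ∈ θ) (hle1 : j ≤ j') (hle2 : j' ≤ j'') :
    (i, j') ∈ θ := by
  obtain ⟨lam, nu, hl, hn, hln, rfl⟩ := hθ
  rw [Finset.mem_sdiff] at h1 h2 ⊢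
  rw [mem_shiftedD] at h1 h2 ⊢
  obtain ⟨⟨a1, a2, a3, a4, a5, a6⟩, hn1⟩ := h1
  obtain ⟨⟨b1, b2, b3, b4, b5, b6⟩, hn2⟩ := h2
  simp only at *
  constructor
  · exact ⟨a1, a2, by omega, by omega, by omega, by omega⟩
  · rw [mem_shiftedD]
    simp only
    intro hcon
    apply hn1
    rw [mem_shiftedD]
    simp only
    exact ⟨a1, a2, a3, a4, a5, by omega⟩

lemma col_cont {n : ℕ} {θ : Finset (ℤ × ℤ)} (hθ : IsShiftedSkewDiagram n θ)
    {i i' i'' j : ℤ} (h1 : (i, j) ∈ θ) (h2 : (i'', j) ∈ θ) (hle1 : i ≤ i') (hle2 : i' ≤ i'') :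
    (i', j) ∈ θ := by
  obtain ⟨lam, nu, hl, hn, hln, rfl⟩ := hθ
  rw [Finset.mem_sdiff] at h1 h2 ⊢
  rw [mem_shiftedD] at h1 h2 ⊢
  obtain ⟨⟨a1, a2, a3, a4, a5, a6⟩, hn1⟩ := h1
  obtain ⟨⟨b1, b2, b3, b4, b5, b6⟩, hn2⟩ := h2
  simp only at *
  have hnu : j ≤ nu i' + i' - 1 := by
    have hpos : 0 < nu i'' := by omega
    have hk : i'' = i' + ((i'' - i').toNat : ℤ) := by omega
    have := part_mono hn (i'' - i').toNat i' (by omega) (by rw [← hk]; exact hpos)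
    rw [← hk] at this
    omega
  constructor
  · exact ⟨by omega, by omega, a3, a4, by omega, hnu⟩
  · rw [mem_shiftedD]
    simp only
    intro hcon
    -- hcon : conditions incl. j ≤ lam i' + i' - 1
    have hlam : 0 < lam i' := by omega
    have hmono : lam i' + (i' - i) ≤ lam i := by
      have hk : i' = i + ((i' - i).toNat : ℤ) := by omega
      have := part_mono hl (i' - i).toNat i (by omega) (by rw [← hk]; exact hlam)
      rw [← hk] at this
      omega
    -- (i,j) ∉ shiftedD lam while satisfying the box conditions, so j > lam i + i - 1
    have hn1' : ¬ (j ≤ lam i + i - 1) := by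
      intro hcc
      exact hn1 (mem_shiftedD.2 ⟨a1, a2, a3, a4, a5, hcc⟩)
    omega

lemma dRim_of_rim {θ T : Finset (ℤ × ℤ)} (hrim : IsRim θ) (hT : T ⊆ θ) :
    dRim T = T.card := by
  unfold dRim
  congr 1
  unfold seRim
  apply Finset.filter_true_of_mem
  intro b hb b' hb'
  have hR : ∀ x ∈ θ, ∀ y ∈ θ, ¬ (x.1 < y.1 ∧ x.2 < y.2) := by
    intro x hx
    rw [hrim] at hx
    exact (Finset.mem_filter.1 hx).2
  exact hR b (hT hb) b' (hT hb')

end Skew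
section MoreHelpers

lemma mem_armAt {θ : Finset (ℤ × ℤ)} {i0 j0 : ℤ} {s : ℕ} {b : ℤ × ℤ} :
    b ∈ armAt θ i0 j0 s ↔ b ∈ θ ∧ i0 ≤ b.1 ∧ b.1 ≤ i0 + (s:ℤ) - 1 ∧
      j0 - (s:ℤ) + 1 ≤ b.2 ∧ b.2 ≤ j0 := by
  unfold armAt
  rw [Finset.mem_filter]

lemma mem_seCorners {θ : Finset (ℤ × ℤ)} {b : ℤ × ℤ} :
    b ∈ seCorners θ ↔ b ∈ θ ∧ (b.1 + 1, b.2) ∉ θ ∧ (b.1, b.2 + 1) ∉ θ := by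
  unfold seCorners
  rw [Finset.mem_filter]

lemma adj_down (x y : ℤ) : Adjacent (x, y) (x + 1, y) := by unfold Adjacent; simp
lemma adj_right (x y : ℤ) : Adjacent (x, y) (x, y + 1) := by unfold Adjacent; simp

end MoreHelpers
/-- Let `θ` be a nonempty rim whose north-east arm is not connected to
`θ̂ = θ` minus the arm, with `θ̂ ≠ ∅` and `a = |θ| - |θ̂|`.  Then for every
integer `p ≥ 1`: if `a = 1` then `C(θ,p) = 2·C(θ̂,p-1) - 2·C(θ̂,p)`, and if
`a > 1` then `C(θ,p) = 2·C(θ̂,p-a) - 3·C(θ̂,p-a+1) + C(θ̂,p-a+2)`. -/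
theorem Ccoef_arm_disconnected (n : ℕ) (hn : 0 < n) (θ : Finset (ℤ × ℤ))
    (hθ : IsShiftedSkewDiagram n θ) (hrim : IsRim θ) (hne : θ.Nonempty)
    (i0 j0 : ℤ) (hbox : (i0, j0) ∈ θ) (htop : ∀ b ∈ θ, i0 ≤ b.1)
    (hright : ∀ b ∈ θ, b.1 = i0 → b.2 ≤ j0)
    (s : ℕ) (hs : 1 ≤ s) (harm : IsRowOrCol (armAt θ i0 j0 s))
    (hmax : ∀ s' : ℕ, 1 ≤ s' → IsRowOrCol (armAt θ i0 j0 s') → s' ≤ s)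
    (θhat : Finset (ℤ × ℤ)) (hθhat : θhat = θ \ armAt θ i0 j0 s)
    (hhatne : θhat.Nonempty)
    (hconn : ¬ ∃ b ∈ armAt θ i0 j0 s, ∃ b' ∈ θhat, Adjacent b b')
    (a : ℤ) (ha : a = (θ.card : ℤ) - (θhat.card : ℤ))
    (p : ℤ) (hp : 1 ≤ p) :
    (a = 1 → Ccoef θ p = 2 * Ccoef θhat (p - 1) - 2 * Ccoef θhat p) ∧
    (1 < a → Ccoef θ p =
      2 * Ccoef θhat (p - a) - 3 * Ccoef θhat (p - a + 1) + Ccoef θhat (p - a + 2)) := by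
  set A := armAt θ i0 j0 s with hA
  have hAsub : A ⊆ θ := Finset.filter_subset _ _
  have hXθ : θhat ⊆ θ := by rw [hθhat]; exact Finset.sdiff_subset
  have hdisj : Disjoint A θhat := by rw [hθhat]; exact Finset.disjoint_sdiff
  have hnadj : ∀ x ∈ A, ∀ y ∈ θhat, ¬ Adjacent x y := by
    intro x hx y hy hadj; exact hconn ⟨x, hx, y, hy, hadj⟩
  have hunion : θ = A ∪ θhat := by
    rw [hθhat]; exact (Finset.union_sdiff_of_subset hAsub).symm
  have hR : ∀ x ∈ θ, ∀ y ∈ θ, ¬ (x.1 < y.1 ∧ x.2 < y.2) := by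
    intro x hx
    rw [hrim] at hx
    exact (Finset.mem_filter.1 hx).2
  have h00 : (i0, j0) ∈ A := by
    rw [hA, mem_armAt]
    exact ⟨hbox, le_refl _, by push_cast; omega, by push_cast; omega, le_refl _⟩
  -- no diagonal boxes in the arm
  have hdiagA : ∀ b ∈ A, b.1 ≠ b.2 := by
    intro b hbA heq
    obtain ⟨b', hb'⟩ := hhatne
    have hb'θ : b' ∈ θ := hXθ hb'
    have hsq := (mem_armAt.1 (hA ▸ hbA)).2
    have hbθ : b ∈ θ := hAsub hbA
    have huv := (skew_le hθ b' hb'θ).2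
    have hu0 := htop b' hb'θ
    have h1 := hR b hbθ b' hb'θ
    have h2 := hR b' hb'θ b hbθ
    have hv : b'.2 ≤ j0 := by
      rcases eq_or_lt_of_le hu0 with he | hl
      · exact hright b' hb'θ he.symm
      · have := hR (i0, j0) hbox b' hb'θ
        simp only at this
        omega
    have hb'A : b' ∈ A := by
      rw [hA, mem_armAt]
      exact ⟨hb'θ, by omega, by omega, by omega, by omega⟩
    exact Finset.disjoint_left.1 hdisj hb'A hb'
  -- the arm has a unique south-east corner c
  obtain ⟨c, hcA, hNA, hcorn_c, huniq, herase⟩ :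
      ∃ c, c ∈ A ∧ Nprime A = 1 ∧ c ∈ seCorners θ ∧
        (∀ b ∈ A, b ∈ seCorners θ → b = c) ∧
        (1 < A.card → Nprime (A.erase c) = 1) := by
    rcases harm with ⟨i, hi⟩ | ⟨j, hj⟩
    · -- row case: the arm lies in row i0
      have hi0 : ∀ b ∈ A, b.1 = i0 := fun b hb => (hi b hb).trans ((hi (i0, j0) h00).symm)
      refine ⟨(i0, j0), h00, ?_, ?_, ?_, ?_⟩
      · -- Nprime A = 1
        have hreach : ∀ b ∈ A, Reach A b (i0, j0) := by
          rintro ⟨b1, b2⟩ hb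
          have hb1 : b1 = i0 := hi0 _ hb
          obtain ⟨hbθ2, c1, c2, c3, c4⟩ := mem_armAt.1 (hA ▸ hb)
          have hbox' : ((b1 : ℤ), j0) ∈ θ := by rw [hb1]; exact hbox
          have hk : j0 = b2 + ((j0 - b2).toNat : ℤ) := by omega
          have hmem : ∀ j', b2 ≤ j' → j' ≤ b2 + ((j0 - b2).toNat : ℤ) → ((b1 : ℤ), j') ∈ A := by
            intro j' h1 h2
            rw [hA, mem_armAt]
            exact ⟨row_cont hθ hbθ2 hbox' h1 (by omega), by omega, by omega, by omega, by omega⟩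
          have hres := reach_row (X := A) b1 b2 ((j0 - b2).toNat) hmem
          rw [show ((i0 : ℤ), j0) = ((b1 : ℤ), b2 + (((j0 - b2).toNat : ℕ) : ℤ)) from by
            rw [Prod.ext_iff]; exact ⟨hb1.symm, by omega⟩]
          exact hres
        exact Nprime_eq_one ⟨_, h00⟩
          (fun b hb b' hb' => Relation.ReflTransGen.trans (hreach b hb)
            (reach_symm hb' (hreach b' hb'))) hdiagA
      · -- (i0, j0) is a SE corner of θ
        rw [mem_seCorners]
        refine ⟨hbox, ?_, ?_⟩
        · intro hmem
          rw [hunion] at hmem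
          rcases Finset.mem_union.1 hmem with h | h
          · have := hi0 _ h; omega
          · exact hnadj _ h00 _ h (by simpa using adj_down i0 j0)
        · intro hmem
          rw [hunion] at hmem
          rcases Finset.mem_union.1 hmem with h | h
          · have := (mem_armAt.1 (hA ▸ h)).2.2.2.2; omega
          · exact hnadj _ h00 _ h (by simpa using adj_right i0 j0)
      · -- uniqueness of corner inside A
        rintro ⟨b1, b2⟩ hb hbc
        have hb1 : b1 = i0 := hi0 _ hb
        obtain ⟨hbθ2, c1, c2, c3, c4⟩ := mem_armAt.1 (hA ▸ hb)
        have hbox' : ((b1 : ℤ), j0) ∈ θ := by rw [hb1]; exact hbox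
        by_contra hne2
        have hlt : b2 < j0 := by
          have hno : ¬ (b1 = i0 ∧ b2 = j0) := fun hcc => hne2 (by rw [Prod.ext_iff]; exact hcc)
          omega
        have hmem2 : ((b1 : ℤ), b2 + 1) ∈ θ := row_cont hθ hbθ2 hbox' (by omega) (by omega)
        exact (mem_seCorners.1 hbc).2.2 hmem2
      · -- erase
        intro hcard
        have hner : (A.erase (i0, j0)).Nonempty := by
          rw [← Finset.card_pos, Finset.card_erase_of_mem h00]; omega
        have hreachE : ∀ b ∈ A.erase (i0, j0), ∀ b' ∈ A.erase (i0, j0),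
            b.2 ≤ b'.2 → Reach (A.erase (i0, j0)) b b' := by
          rintro ⟨b1, b2⟩ hb ⟨b1', b2'⟩ hb' hle
          simp only at hle
          have hbA := Finset.mem_of_mem_erase hb
          have hbA' := Finset.mem_of_mem_erase hb'
          have hb1 : b1 = i0 := hi0 _ hbA
          have hbb : b1 = b1' := hb1.trans ((hi0 _ hbA').symm)
          subst hbb
          obtain ⟨hbθ2, c1, c2, c3, c4⟩ := mem_armAt.1 (hA ▸ hbA)
          obtain ⟨hbθ2', c1', c2', c3', c4'⟩ := mem_armAt.1 (hA ▸ hbA')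
          have hb2 : ¬ (b1 = i0 ∧ b2 = j0) := fun hcc =>
            (Finset.ne_of_mem_erase hb) (by rw [Prod.ext_iff]; exact hcc)
          have hb2' : ¬ (b1 = i0 ∧ b2' = j0) := fun hcc =>
            (Finset.ne_of_mem_erase hb') (by rw [Prod.ext_iff]; exact hcc)
          have hk : b2' = b2 + ((b2' - b2).toNat : ℤ) := by omega
          have hmem : ∀ j', b2 ≤ j' → j' ≤ b2 + ((b2' - b2).toNat : ℤ) →
              ((b1 : ℤ), j') ∈ A.erase (i0, j0) := by
            intro j' h1 h2
            refine Finset.mem_erase.2 ⟨?_, ?_⟩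
            · intro hcon
              rw [Prod.ext_iff] at hcon
              omega
            · rw [hA, mem_armAt]
              exact ⟨row_cont hθ hbθ2 hbθ2' h1 (by omega), by omega, by omega, by omega, by omega⟩
          have hres := reach_row (X := A.erase (i0, j0)) b1 b2 ((b2' - b2).toNat) hmem
          rw [hk]
          exact hres
        refine Nprime_eq_one hner ?_ (fun b hb => hdiagA b (Finset.mem_of_mem_erase hb))
        intro b hb b' hb'
        rcases le_total b.2 b'.2 with h | h
        · exact hreachE b hb b' hb' h
        · exact reach_symm hb' (hreachE b' hb' b hb h)
    · -- column case: the arm lies in column j0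
      have hj0 : ∀ b ∈ A, b.2 = j0 := fun b hb => (hj b hb).trans ((hj (i0, j0) h00).symm)
      have hne2 : (A.image Prod.fst).Nonempty := ⟨i0, Finset.mem_image_of_mem _ h00⟩
      set M := (A.image Prod.fst).max' hne2 with hM
      have hMmem : (M, j0) ∈ A := by
        rcases Finset.mem_image.1 (Finset.max'_mem _ hne2) with ⟨b, hb, hb1⟩
        have hb2 : b.2 = j0 := hj0 b hb
        have heq : b = (M, j0) := Prod.ext hb1 hb2
        rwa [heq] at hb
      have hMle : ∀ b ∈ A, b.1 ≤ M := fun b hb =>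
        Finset.le_max' _ _ (Finset.mem_image_of_mem _ hb)
      obtain ⟨hMθ, d1, d2, d3, d4⟩ := mem_armAt.1 (hA ▸ hMmem)
      refine ⟨(M, j0), hMmem, ?_, ?_, ?_, ?_⟩
      · -- Nprime A = 1
        have hreach : ∀ b ∈ A, Reach A b (M, j0) := by
          rintro ⟨b1, b2⟩ hb
          have hb2 : b2 = j0 := hj0 _ hb
          obtain ⟨hbθ2, c1, c2, c3, c4⟩ := mem_armAt.1 (hA ▸ hb)
          have hMθ' : (M, (b2 : ℤ)) ∈ θ := by rw [hb2]; exact hMθ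
          have hb1M : b1 ≤ M := hMle _ hb
          have hk : M = b1 + ((M - b1).toNat : ℤ) := by omega
          have hmem : ∀ i', b1 ≤ i' → i' ≤ b1 + ((M - b1).toNat : ℤ) → (i', (b2 : ℤ)) ∈ A := by
            intro i' h1 h2
            rw [hA, mem_armAt]
            exact ⟨col_cont hθ hbθ2 hMθ' h1 (by omega), by omega, by omega, by omega, by omega⟩
          have hres := reach_col (X := A) b1 b2 ((M - b1).toNat) hmem
          rw [show ((M : ℤ), j0) = (b1 + (((M - b1).toNat : ℕ) : ℤ), (b2 : ℤ)) from by
            rw [Prod.ext_iff]; exact ⟨by omega, hb2.symm⟩]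
          exact hres
        exact Nprime_eq_one ⟨_, h00⟩
          (fun b hb b' hb' => Relation.ReflTransGen.trans (hreach b hb)
            (reach_symm hb' (hreach b' hb'))) hdiagA
      · -- corner
        rw [mem_seCorners]
        refine ⟨hAsub hMmem, ?_, ?_⟩
        · intro hmem
          rw [hunion] at hmem
          rcases Finset.mem_union.1 hmem with h | h
          · have := hMle _ h; omega
          · exact hnadj _ hMmem _ h (by simpa using adj_down M j0)
        · intro hmem
          rw [hunion] at hmem
          rcases Finset.mem_union.1 hmem with h | h
          · have := hj0 _ h; omega
          · exact hnadj _ hMmem _ h (by simpa using adj_right M j0)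
      · -- uniqueness
        rintro ⟨b1, b2⟩ hb hbc
        have hb2 : b2 = j0 := hj0 _ hb
        obtain ⟨hbθ2, c1, c2, c3, c4⟩ := mem_armAt.1 (hA ▸ hb)
        have hMθ' : (M, (b2 : ℤ)) ∈ θ := by rw [hb2]; exact hMθ
        by_contra hne3
        have hlt : b1 < M := by
          have hno : ¬ (b1 = M ∧ b2 = j0) := fun hcc => hne3 (by rw [Prod.ext_iff]; exact hcc)
          have := hMle _ hb
          omega
        have hmem2 : (b1 + 1, (b2 : ℤ)) ∈ θ := col_cont hθ hbθ2 hMθ' (by omega) (by omega)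
        exact (mem_seCorners.1 hbc).2.1 hmem2
      · -- erase
        intro hcard
        have hner : (A.erase (M, j0)).Nonempty := by
          rw [← Finset.card_pos, Finset.card_erase_of_mem hMmem]; omega
        have hreachE : ∀ b ∈ A.erase (M, j0), ∀ b' ∈ A.erase (M, j0),
            b.1 ≤ b'.1 → Reach (A.erase (M, j0)) b b' := by
          rintro ⟨b1, b2⟩ hb ⟨b1', b2'⟩ hb' hle
          simp only at hle
          have hbA := Finset.mem_of_mem_erase hb
          have hbA' := Finset.mem_of_mem_erase hb'
          have hb2 : b2 = j0 := hj0 _ hbA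
          have hbb : b2 = b2' := hb2.trans ((hj0 _ hbA').symm)
          subst hbb
          obtain ⟨hbθ2, c1, c2, c3, c4⟩ := mem_armAt.1 (hA ▸ hbA)
          obtain ⟨hbθ2', c1', c2', c3', c4'⟩ := mem_armAt.1 (hA ▸ hbA')
          have hne4 : ¬ (b1 = M ∧ b2 = j0) := fun hcc =>
            (Finset.ne_of_mem_erase hb) (by rw [Prod.ext_iff]; exact hcc)
          have hne4' : ¬ (b1' = M ∧ b2 = j0) := fun hcc =>
            (Finset.ne_of_mem_erase hb') (by rw [Prod.ext_iff]; exact hcc)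
          have hb1M : b1' ≤ M := hMle _ hbA'
          have hk : b1' = b1 + ((b1' - b1).toNat : ℤ) := by omega
          have hmem : ∀ i', b1 ≤ i' → i' ≤ b1 + ((b1' - b1).toNat : ℤ) →
              (i', (b2 : ℤ)) ∈ A.erase (M, j0) := by
            intro i' h1 h2
            refine Finset.mem_erase.2 ⟨?_, ?_⟩
            · intro hcon
              rw [Prod.ext_iff] at hcon
              omega
            · rw [hA, mem_armAt]
              exact ⟨col_cont hθ hbθ2 hbθ2' h1 (by omega), by omega, by omega, by omega, by omega⟩
          have hres := reach_col (X := A.erase (M, j0)) b1 b2 ((b1' - b1).toNat) hmem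
          rw [hk]
          exact hres
        refine Nprime_eq_one hner ?_ (fun b hb => hdiagA b (Finset.mem_of_mem_erase hb))
        intro b hb b' hb'
        rcases le_total b.1 b'.1 with h | h
        · exact hreachE b hb b' hb' h
        · exact reach_symm hb' (hreachE b' hb' b hb h)
  -- corner structure of θ
  have hcorXsub : seCorners θhat ⊆ θhat := Finset.filter_subset _ _
  have hcorθ : seCorners θ = insert c (seCorners θhat) := by
    ext b
    rw [Finset.mem_insert]
    constructor
    · intro hb
      have hbθ : b ∈ θ := (mem_seCorners.1 hb).1
      rw [hunion] at hbθ
      rcases Finset.mem_union.1 hbθ with h | h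
      · exact Or.inl (huniq b h hb)
      · refine Or.inr (mem_seCorners.2 ⟨h, ?_, ?_⟩)
        · exact fun hc => (mem_seCorners.1 hb).2.1 (hXθ hc)
        · exact fun hc => (mem_seCorners.1 hb).2.2 (hXθ hc)
    · rintro (rfl | hb)
      · exact hcorn_c
      · have hbX : b ∈ θhat := hcorXsub hb
        refine mem_seCorners.2 ⟨hXθ hbX, ?_, ?_⟩
        · intro hc
          rw [hunion] at hc
          rcases Finset.mem_union.1 hc with h | h
          · exact hnadj _ h _ hbX (adj_symm (adj_down b.1 b.2))
          · exact (mem_seCorners.1 hb).2.1 h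
        · intro hc
          rw [hunion] at hc
          rcases Finset.mem_union.1 hc with h | h
          · exact hnadj _ h _ hbX (adj_symm (adj_right b.1 b.2))
          · exact (mem_seCorners.1 hb).2.2 h
  have hcX : c ∉ seCorners θhat := fun h => Finset.disjoint_left.1 hdisj hcA (hcorXsub h)
  have hcardsum : θ.card = A.card + θhat.card := by
    rw [hunion]; exact Finset.card_union_of_disjoint hdisj
  have hacard : a = ((A.card : ℕ) : ℤ) := by omega
  have hA1 : 1 ≤ A.card := Finset.card_pos.2 ⟨c, hcA⟩
  have master : ∀ S ∈ (seCorners θhat).powerset,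
      (-1 : ℤ) ^ S.card * hcoef (Nprime (θ \ S)) ((dRim (θ \ S) : ℤ) - p)
        + (-1 : ℤ) ^ (insert c S).card * hcoef (Nprime (θ \ insert c S)) ((dRim (θ \ insert c S) : ℤ) - p)
      = (-1 : ℤ) ^ S.card *
          (hcoef (1 + Nprime (θhat \ S)) (((A.card : ℕ) : ℤ) + (((θhat.card : ℕ) : ℤ) - ((S.card : ℕ) : ℤ)) - p)
           - hcoef (Nprime (A.erase c) + Nprime (θhat \ S))
               (((A.card : ℕ) : ℤ) - 1 + (((θhat.card : ℕ) : ℤ) - ((S.card : ℕ) : ℤ)) - p)) := by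
    intro S hS
    have hS1 : S ⊆ seCorners θhat := Finset.mem_powerset.1 hS
    have hSX : S ⊆ θhat := hS1.trans hcorXsub
    have hSθ : S ⊆ θ := hSX.trans hXθ
    have hcS : c ∉ S := fun h => Finset.disjoint_left.1 hdisj hcA (hSX h)
    have hdisjAS : Disjoint A S := Finset.disjoint_of_subset_right hSX hdisj
    have hsd1 : θ \ S = A ∪ (θhat \ S) := by
      rw [hunion, Finset.union_sdiff_distrib, Finset.sdiff_eq_self_of_disjoint hdisjAS]
    have hnadj1 : ∀ x ∈ A, ∀ y ∈ θhat \ S, ¬ Adjacent x y :=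
      fun x hx y hy => hnadj x hx y (Finset.sdiff_subset hy)
    have hdisj1 : Disjoint A (θhat \ S) :=
      Finset.disjoint_of_subset_right Finset.sdiff_subset hdisj
    have hN1 : Nprime (θ \ S) = 1 + Nprime (θhat \ S) := by
      rw [hsd1, Nprime_union hdisj1 hnadj1, hNA]
    have hle1 := Finset.card_le_card hSX
    have hle2 := Finset.card_le_card hSθ
    have hd1 : (dRim (θ \ S) : ℤ) - p
        = ((A.card : ℕ) : ℤ) + (((θhat.card : ℕ) : ℤ) - ((S.card : ℕ) : ℤ)) - p := by
      rw [dRim_of_rim hrim Finset.sdiff_subset, Finset.card_sdiff_of_subset hSθ]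
      push_cast
      omega
    have hsd2 : θ \ insert c S = (A.erase c) ∪ (θhat \ S) := by
      ext b
      rw [Finset.mem_sdiff, Finset.mem_union, Finset.mem_erase, Finset.mem_sdiff,
        Finset.mem_insert]
      constructor
      · rintro ⟨hbθ, hbc⟩
        push_neg at hbc
        rw [hunion] at hbθ
        rcases Finset.mem_union.1 hbθ with h | h
        · exact Or.inl ⟨hbc.1, h⟩
        · exact Or.inr ⟨h, hbc.2⟩
      · rintro (⟨hne1, hbA⟩ | ⟨hbX, hbS⟩)
        · refine ⟨hAsub hbA, ?_⟩
          push_neg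
          exact ⟨hne1, fun h => Finset.disjoint_left.1 hdisjAS hbA h⟩
        · refine ⟨hXθ hbX, ?_⟩
          push_neg
          exact ⟨fun h => Finset.disjoint_left.1 hdisj hcA (h ▸ hbX), hbS⟩
    have hnadj2 : ∀ x ∈ A.erase c, ∀ y ∈ θhat \ S, ¬ Adjacent x y :=
      fun x hx y hy => hnadj1 x (Finset.mem_of_mem_erase hx) y hy
    have hdisj2 : Disjoint (A.erase c) (θhat \ S) :=
      Finset.disjoint_of_subset_left (Finset.erase_subset _ _) hdisj1
    have hN2 : Nprime (θ \ insert c S) = Nprime (A.erase c) + Nprime (θhat \ S) := by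
      rw [hsd2, Nprime_union hdisj2 hnadj2]
    have hinsθ : insert c S ⊆ θ := Finset.insert_subset (hAsub hcA) hSθ
    have hd2 : (dRim (θ \ insert c S) : ℤ) - p
        = ((A.card : ℕ) : ℤ) - 1 + (((θhat.card : ℕ) : ℤ) - ((S.card : ℕ) : ℤ)) - p := by
      rw [dRim_of_rim hrim Finset.sdiff_subset, Finset.card_sdiff_of_subset hinsθ,
        Finset.card_insert_of_notMem hcS]
      push_cast
      omega
    rw [hN1, hd1, hN2, hd2, Finset.card_insert_of_notMem hcS]
    ring
  have hdXall : ∀ S ∈ (seCorners θhat).powerset, ∀ q : ℤ,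
      (dRim (θhat \ S) : ℤ) - q = (((θhat.card : ℕ) : ℤ) - ((S.card : ℕ) : ℤ)) - q := by
    intro S hS q
    have hSX : S ⊆ θhat := (Finset.mem_powerset.1 hS).trans hcorXsub
    have hle1 := Finset.card_le_card hSX
    rw [dRim_of_rim hrim (Finset.sdiff_subset.trans hXθ), Finset.card_sdiff_of_subset hSX]
    push_cast
    omega
  have expand : Ccoef θ p = ∑ S ∈ (seCorners θhat).powerset,
      (-1 : ℤ) ^ S.card *
          (hcoef (1 + Nprime (θhat \ S)) (((A.card : ℕ) : ℤ) + (((θhat.card : ℕ) : ℤ) - ((S.card : ℕ) : ℤ)) - p)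
           - hcoef (Nprime (A.erase c) + Nprime (θhat \ S))
               (((A.card : ℕ) : ℤ) - 1 + (((θhat.card : ℕ) : ℤ) - ((S.card : ℕ) : ℤ)) - p)) := by
    unfold Ccoef
    rw [hcorθ, Finset.sum_powerset_insert hcX, ← Finset.sum_add_distrib]
    exact Finset.sum_congr rfl master
  have expandX : ∀ q : ℤ, Ccoef θhat q = ∑ S ∈ (seCorners θhat).powerset,
      (-1 : ℤ) ^ S.card * hcoef (Nprime (θhat \ S))
        ((((θhat.card : ℕ) : ℤ) - ((S.card : ℕ) : ℤ)) - q) := by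
    intro q
    unfold Ccoef
    apply Finset.sum_congr rfl
    intro S hS
    rw [hdXall S hS q]
  constructor
  · -- a = 1
    intro ha1
    have hα : ((A.card : ℕ) : ℤ) = 1 := by omega
    have hA1' : A.card = 1 := by omega
    have hAsing : A = {c} := by
      rcases Finset.card_eq_one.1 hA1' with ⟨x, hx⟩
      have hcx : c = x := Finset.mem_singleton.1 (hx ▸ hcA)
      rw [hx, hcx]
    have hNE : Nprime (A.erase c) = 0 := by
      rw [hAsing, Finset.erase_singleton]
      exact Nprime_empty
    rw [expand, expandX (p - 1), expandX p, Finset.mul_sum, Finset.mul_sum,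
      ← Finset.sum_sub_distrib]
    apply Finset.sum_congr rfl
    intro S hS
    rw [hNE, hα]
    set N := Nprime (θhat \ S) with hN
    set D := (((θhat.card : ℕ) : ℤ) - ((S.card : ℕ) : ℤ)) with hD
    have e0 : (0 : ℕ) + N = N := by omega
    have e1 : hcoef (1 + N) ((1 : ℤ) + D - p) = hcoef (N + 1) ((1 : ℤ) + D - p) := by
      rw [add_comm 1 N]
    have e2 : hcoef N (D - (p - 1)) = hcoef N ((1 : ℤ) + D - p) := by congr 1; ring
    have e3 : hcoef N ((1 : ℤ) - 1 + D - p) = hcoef N (D - p) := by congr 1; ring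
    have e4 : hcoef N ((1 : ℤ) + D - p - 1) = hcoef N (D - p) := by congr 1; ring
    have hrec := hcoef_rec N ((1 : ℤ) + D - p)
    rw [e0, e1, e2, e3]
    linear_combination ((-1 : ℤ) ^ S.card) * hrec - ((-1 : ℤ) ^ S.card) * e4
  · -- a > 1
    intro ha2
    have hge : 1 < A.card := by omega
    have hNE : Nprime (A.erase c) = 1 := herase hge
    rw [hacard]
    rw [expand, expandX (p - ((A.card : ℕ) : ℤ)), expandX (p - ((A.card : ℕ) : ℤ) + 1),
      expandX (p - ((A.card : ℕ) : ℤ) + 2), Finset.mul_sum, Finset.mul_sum,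
      ← Finset.sum_sub_distrib, ← Finset.sum_add_distrib]
    apply Finset.sum_congr rfl
    intro S hS
    rw [hNE]
    set α := ((A.card : ℕ) : ℤ) with hαd
    set N := Nprime (θhat \ S) with hN
    set D := (((θhat.card : ℕ) : ℤ) - ((S.card : ℕ) : ℤ)) with hD
    have f1 : hcoef (1 + N) (α + D - p) = hcoef (N + 1) (α + D - p) := by rw [add_comm 1 N]
    have f2 : hcoef (1 + N) (α - 1 + D - p) = hcoef (N + 1) (α - 1 + D - p) := by
      rw [add_comm 1 N]
    have g1 : hcoef N (D - (p - α)) = hcoef N (α + D - p) := by congr 1; ring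
    have g2 : hcoef N (D - (p - α + 1)) = hcoef N (α - 1 + D - p) := by congr 1; ring
    have g3 : hcoef N (D - (p - α + 2)) = hcoef N (α - 1 + D - p - 1) := by congr 1; ring
    have e4 : hcoef N (α + D - p - 1) = hcoef N (α - 1 + D - p) := by congr 1; ring
    have rec1 := hcoef_rec N (α + D - p)
    have rec2 := hcoef_rec N (α - 1 + D - p)
    rw [f1, f2, g1, g2, g3]
    linear_combination ((-1 : ℤ) ^ S.card) * rec1 - ((-1 : ℤ) ^ S.card) * rec2
      - ((-1 : ℤ) ^ S.card) * e4
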